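/- arXiv:2004.06529 — 2 statements merged into one kernel-verified Lean document; each statement's English description precedes it below -/
import Mathlib

section
/- Let 0 < λ < 1 and let ∂ be a nonconstant meromorphic (or just differentiable complex analytic on a domain) function satisfying 9 ∂² (∂')² = 2 (1 − ∂²)(4∂³ − 3∂ + 1 − 2λ²) on a neighbourhood of a point a. Then ∂(a) ≠ 0, provided ∂ is nonconstant; i.e., any analytic solution of this equation that vanishes at some point is constant. -/
open Topology Filter

theorem stmt_13 (lam : ℝ) (hlam0 : 0 < lam) (hlam1 : lam < 1)
    (U : Set ℂ) (hU : IsOpen U) (hUconn : IsPreconnected U)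
    (p : ℂ → ℂ) (hp : DifferentiableOn ℂ p U)
    (heq : ∀ x ∈ U, 9 * p x ^ 2 * (deriv p x) ^ 2 =
      2 * (1 - p x ^ 2) * (4 * p x ^ 3 - 3 * p x + 1 - 2 * (lam : ℂ) ^ 2))
    (hnc : ¬ ∃ k : ℂ, ∀ x ∈ U, p x = k)
    (a : ℂ) (ha : a ∈ U) :
    p a ≠ 0 := by
  intro hpa
  -- From evaluating at a: 1 - 2 lam^2 = 0
  have h0 := heq a ha
  rw [hpa] at h0
  have hlam : (1 : ℂ) - 2 * (lam : ℂ) ^ 2 = 0 := by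
    have : (2 : ℂ) * (1 - 0 ^ 2) * (4 * 0 ^ 3 - 3 * 0 + 1 - 2 * (lam : ℂ) ^ 2) = 0 := by
      rw [← h0]; ring
    simpa using by linear_combination this / 2
  -- analyticity
  have hpan : AnalyticOnNhd ℂ p U := hp.analyticOnNhd hU
  have hdan : AnalyticOnNhd ℂ (deriv p) U := hpan.deriv_of_isOpen hU
  set f : ℂ → ℂ := fun x => 9 * p x * (deriv p x) ^ 2 - 2 * (1 - p x ^ 2) * (4 * p x ^ 2 - 3)
    with hf
  have hfan : AnalyticOnNhd ℂ f U := by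
    intro x hx
    exact (((analyticAt_const.mul (hpan x hx)).mul ((hdan x hx).pow 2)).sub
      ((analyticAt_const.mul (analyticAt_const.sub ((hpan x hx).pow 2))).mul
        ((analyticAt_const.mul ((hpan x hx).pow 2)).sub analyticAt_const)))
  -- p * f = 0 on U
  have hpf : ∀ x ∈ U, p x * f x = 0 := by
    intro x hx
    have h := heq x hx
    have : 4 * p x ^ 3 - 3 * p x + 1 - 2 * (lam : ℂ) ^ 2 = 4 * p x ^ 3 - 3 * p x := by
      linear_combination hlam
    rw [this] at h
    simp only [hf]
    ring_nf
    ring_nf at h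
    linear_combination h
  -- p not identically zero on U
  have hpne : ¬ Set.EqOn p 0 U := by
    intro h
    exact hnc ⟨0, fun x hx => h hx⟩
  -- so p ≠ 0 eventually in punctured nbhd of a
  rcases (hpan a ha).eventually_eq_zero_or_eventually_ne_zero with h | hpa'
  · exact hpne (hpan.eqOn_zero_of_preconnected_of_frequently_eq_zero hUconn ha
      ((h.filter_mono nhdsWithin_le_nhds).frequently))
  · -- f = 0 frequently near a
    have hUnhd : U ∈ 𝓝 a := hU.mem_nhds ha
    have hfz : ∀ᶠ z in 𝓝[≠] a, f z = 0 := by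
      filter_upwards [hpa', nhdsWithin_le_nhds hUnhd] with z hz1 hz2
      have := hpf z hz2
      exact (mul_eq_zero.mp this).resolve_left hz1
    have hfreq : ∃ᶠ z in 𝓝[≠] a, f z = 0 := hfz.frequently
    have : Set.EqOn f 0 U :=
      hfan.eqOn_zero_of_preconnected_of_frequently_eq_zero hUconn ha hfreq
    have hfa := this ha
    simp only [hf, hpa, Pi.zero_apply] at hfa
    norm_num at hfa
end

section
/- Let Λ be a constant and ∇ a nonconstant analytic function on a connected domain satisfying [(9/8)(∇')² + Λ(∇ − 1)]² = ∇(∇ − 1)²(4∇ − 3)². Then ∇ has no zeros. -/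
open Filter Set Metric

private noncomputable def Qd (w : ℂ) : ℂ :=
  ((w - 1) ^ 2 + 2 * w * (w - 1)) * (4 * w - 3) ^ 2 + 8 * (w * (w - 1) ^ 2) * (4 * w - 3)

private lemma hasDerivAt_Q (w : ℂ) :
    HasDerivAt (fun z : ℂ => z * (z - 1) ^ 2 * (4 * z - 3) ^ 2) (Qd w) w := by
  have h1 : HasDerivAt (fun z : ℂ => z * (z - 1) ^ 2)
      (1 * (w - 1) ^ 2 + w * ((2 : ℕ) * (w - 1) ^ (2 - 1) * 1)) w :=
    (hasDerivAt_id w).mul (((hasDerivAt_id w).sub_const 1).pow 2)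
  have h0 : HasDerivAt (fun z : ℂ => 4 * z - 3) 4 w := by
    simpa using ((hasDerivAt_id w).const_mul (4 : ℂ)).sub_const 3
  have h2 : HasDerivAt (fun z : ℂ => (4 * z - 3) ^ 2)
      ((2 : ℕ) * (4 * w - 3) ^ (2 - 1) * 4) w := h0.pow 2
  have h3 := h1.mul h2
  refine h3.congr_deriv ?_
  unfold Qd
  push_cast
  ring

theorem stmt_16 (Λ : ℂ)
    (U : Set ℂ) (hU : IsOpen U) (hUconn : IsPreconnected U)
    (nab : ℂ → ℂ) (hnab : DifferentiableOn ℂ nab U)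
    (heq : ∀ x ∈ U, ((9 / 8) * (deriv nab x) ^ 2 + Λ * (nab x - 1)) ^ 2 =
      nab x * (nab x - 1) ^ 2 * (4 * nab x - 3) ^ 2)
    (hnc : ¬ ∃ k : ℂ, ∀ x ∈ U, nab x = k) :
    ∀ x ∈ U, nab x ≠ 0 := by
  intro a haU ha0
  have hA : AnalyticOnNhd ℂ nab U := hnab.analyticOnNhd hU
  have hA' : AnalyticOnNhd ℂ (deriv nab) U := hA.deriv
  have hA'' : AnalyticOnNhd ℂ (deriv (deriv nab)) U := hA'.deriv
  set n' := deriv nab with hn'def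
  set n'' := deriv (deriv nab) with hn''def
  set P : ℂ → ℂ := fun x => (9 / 8) * (n' x) ^ 2 + Λ * (nab x - 1) with hPdef
  set F : ℂ → ℂ := fun x => 2 * P x * ((9 / 4) * n'' x + Λ) - Qd (nab x) with hFdef
  -- key pointwise relation from differentiating the equation
  have hkey : ∀ x ∈ U, F x * n' x = 0 := by
    intro x hx
    have hdn : HasDerivAt nab (n' x) x := (hA x hx).differentiableAt.hasDerivAt
    have hdn' : HasDerivAt n' (n'' x) x := (hA' x hx).differentiableAt.hasDerivAt
    have hP : HasDerivAt P ((9 / 8) * ((2 : ℕ) * n' x ^ (2 - 1) * n'' x) + Λ * n' x) x := by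
      have := ((hdn'.pow 2).const_mul ((9 : ℂ) / 8)).add ((hdn.sub_const 1).const_mul Λ)
      exact this
    have hL : HasDerivAt (fun y => P y ^ 2)
        ((2 : ℕ) * P x ^ (2 - 1) * ((9 / 8) * ((2 : ℕ) * n' x ^ (2 - 1) * n'' x) + Λ * n' x)) x :=
      hP.pow 2
    have hR : HasDerivAt (fun y => nab y * (nab y - 1) ^ 2 * (4 * nab y - 3) ^ 2)
        (Qd (nab x) * n' x) x := by
      have := (hasDerivAt_Q (nab x)).comp x hdn
      exact this
    have hev : (fun y => nab y * (nab y - 1) ^ 2 * (4 * nab y - 3) ^ 2)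
        =ᶠ[nhds x] (fun y => P y ^ 2) := by
      filter_upwards [hU.mem_nhds hx] with y hy
      exact (heq y hy).symm
    have hR' : HasDerivAt (fun y => P y ^ 2) (Qd (nab x) * n' x) x :=
      hR.congr_of_eventuallyEq hev.symm
    have huniq := hL.unique hR'
    push_cast at huniq
    linear_combination huniq
  -- P a = 0
  have hPa : P a = 0 := by
    have h := heq a haU
    rw [ha0] at h
    simp at h
    simp only [hPdef]
    rw [ha0]
    linear_combination h
  -- F a = -9
  have hFa : F a = -9 := by
    simp only [hFdef, hPa, ha0, Qd]
    ring
  -- dichotomy for n' at a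
  rcases (hA' a haU).eventually_eq_zero_or_eventually_ne_zero with hz | hnz
  · -- n' vanishes near a ⇒ nab locally constant ⇒ constant on U, contradiction
    obtain ⟨ε, hε, hball⟩ : ∃ ε > 0, ∀ x ∈ ball a ε, n' x = 0 ∧ x ∈ U := by
      have h2 : ∀ᶠ x in nhds a, n' x = 0 ∧ x ∈ U := hz.and (hU.mem_nhds haU)
      rcases Metric.eventually_nhds_iff_ball.mp h2 with ⟨ε, hε, h⟩
      exact ⟨ε, hε, h⟩
    have hconst : ∀ x ∈ ball a ε, nab x = nab a := by
      intro x hx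
      refine Convex.is_const_of_fderivWithin_eq_zero (convex_ball a ε)
        (fun y hy => ((hA y (hball y hy).2).differentiableAt).differentiableWithinAt)
        (fun y hy => ?_) hx (mem_ball_self hε)
      rw [fderivWithin_of_isOpen isOpen_ball hy]
      have hd : HasDerivAt nab 0 y := by
        have := (hA y (hball y hy).2).differentiableAt.hasDerivAt
        rwa [← hn'def, (hball y hy).1] at this
      have := hd.hasFDerivAt.fderiv
      rw [this]
      ext
      simp
    have : EqOn nab (fun _ => nab a) U := by
      refine hA.eqOn_of_preconnected_of_eventuallyEq analyticOnNhd_const hUconn haU ?_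
      filter_upwards [Metric.ball_mem_nhds a hε] with y hy using hconst y hy
    exact hnc ⟨nab a, fun x hx => this hx⟩
  · -- n' ≠ 0 on punctured nbhd ⇒ F = 0 there ⇒ F a = 0 by continuity; but F a = -9
    have hFcont : ContinuousAt F a := by
      have c1 : ContinuousAt nab a := (hA a haU).continuousAt
      have c2 : ContinuousAt n' a := (hA' a haU).continuousAt
      have c3 : ContinuousAt n'' a := (hA'' a haU).continuousAt
      simp only [hFdef, hPdef, Qd]
      fun_prop
    have hF0 : ∀ᶠ x in nhdsWithin a {a}ᶜ, F x = 0 := by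
      have hUmem : ∀ᶠ x in nhdsWithin a {a}ᶜ, x ∈ U :=
        eventually_nhdsWithin_of_eventually_nhds (hU.mem_nhds haU)
      filter_upwards [hnz, hUmem] with x hx1 hx2
      rcases mul_eq_zero.mp (hkey x hx2) with h | h
      · exact h
      · exact absurd h hx1
    have ht1 : Tendsto F (nhdsWithin a {a}ᶜ) (nhds (F a)) :=
      hFcont.continuousWithinAt.tendsto
    have ht2 : Tendsto F (nhdsWithin a {a}ᶜ) (nhds 0) :=
      tendsto_const_nhds.congr' (hF0.mono fun x h => h.symm)
    have : F a = 0 := tendsto_nhds_unique ht1 ht2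
    rw [hFa] at this
    norm_num at this
end
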